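/- arXiv:2410.19066 — 3 statements merged into one kernel-verified Lean document; each statement's English description precedes it below -/
import Mathlib

section
/- Let V be a set of n variables and consider a complete Boolean k-CSP instance (every k-subset has a predicate rejecting at least one assignment). Then the number of satisfying assignments is at most ∑_{i=0}^{k-1} binom(n, i), hence O(n^{k-1}) for fixed k. -/
/-- A complete Boolean k-CSP instance (every k-subset has a predicate,
depending only on its variables, rejecting at least one assignment) has at most
`∑_{i=0}^{k-1} choose n i` satisfying assignments. -/
theorem stmt1 {V : Type*} [Fintype V] [DecidableEq V] (k : ℕ) (hk : 1 ≤ k)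
    (P : Finset V → (V → Bool) → Bool)
    (hdep : ∀ (C : Finset V) (α β : V → Bool), (∀ v ∈ C, α v = β v) → P C α = P C β)
    (hreject : ∀ C : Finset V, C.card = k → ∃ α : V → Bool, P C α = false) :
    Nat.card {α : V → Bool // ∀ C : Finset V, C.card = k → P C α = true}
      ≤ ∑ i ∈ Finset.range k, (Fintype.card V).choose i := by
  classical
  set Sat : Finset (V → Bool) :=
    Finset.univ.filter (fun α => ∀ C : Finset V, C.card = k → P C α = true) with hSat
  have hcard : Nat.card {α : V → Bool // ∀ C : Finset V, C.card = k → P C α = true}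
      = Sat.card := by
    rw [Nat.card_eq_fintype_card, Fintype.card_subtype]
  rw [hcard]
  set supp : (V → Bool) → Finset V := fun α => Finset.univ.filter (fun v => α v = true)
    with hsupp
  have hinj : Set.InjOn supp Sat := by
    intro α _ β _ h
    funext v
    have := congrArg (fun s => v ∈ s) h
    simp only [hsupp, Finset.mem_filter, Finset.mem_univ, true_and, eq_iff_iff] at this
    cases hα : α v <;> cases hβ : β v <;> simp_all
  set 𝒜 : Finset (Finset V) := Sat.image supp with h𝒜
  have hcard2 : Sat.card = 𝒜.card := (Finset.card_image_of_injOn hinj).symm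
  rw [hcard2]
  -- no k-set is shattered
  have hnoshatter : ∀ C : Finset V, C.card = k → ¬ 𝒜.Shatters C := by
    intro C hC hsh
    obtain ⟨β, hβ⟩ := hreject C hC
    obtain ⟨u, hu, huC⟩ := hsh (Finset.filter_subset (fun v => β v = true) C)
    obtain ⟨α, hα, rfl⟩ := Finset.mem_image.1 hu
    have hαSat : ∀ C' : Finset V, C'.card = k → P C' α = true := by
      simpa [hSat] using hα
    have hagree : ∀ v ∈ C, α v = β v := by
      intro v hv
      have := congrArg (fun s => v ∈ s) huC
      simp only [hsupp, Finset.mem_inter, Finset.mem_filter, Finset.mem_univ, true_and,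
        eq_iff_iff] at this
      cases hα : α v <;> cases hβ : β v <;> simp_all
    have := hdep C α β hagree
    rw [hαSat C hC, hβ] at this
    exact Bool.true_eq_false.mp this
  have hvc : 𝒜.vcDim ≤ k - 1 := by
    rw [Finset.vcDim]
    refine Finset.sup_le fun s hs => ?_
    rw [Finset.mem_shatterer] at hs
    by_contra h
    push_neg at h
    have hk' : k ≤ s.card := by omega
    obtain ⟨C, hCs, hCcard⟩ := Finset.exists_subset_card_eq hk'
    exact hnoshatter C hCcard (hs.mono_right hCs)
  calc 𝒜.card ≤ 𝒜.shatterer.card := Finset.card_le_card_shatterer 𝒜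
    _ ≤ ∑ i ∈ Finset.Iic 𝒜.vcDim, (Fintype.card V).choose i :=
        Finset.card_shatterer_le_sum_vcDim
    _ ≤ ∑ i ∈ Finset.Iic (k-1), (Fintype.card V).choose i := by
        apply Finset.sum_le_sum_of_subset
        exact Finset.Iic_subset_Iic.2 hvc
    _ = ∑ i ∈ Finset.range k, (Fintype.card V).choose i := by
        have : Finset.Iic (k-1) = Finset.range k := by
          ext i
          simp only [Finset.mem_Iic, Finset.mem_range]
          omega
        rw [this]
end

section
/- Suppose that for indices i = 1, 2, ..., N, event E_i can occur only if both (a) an independent uniform γ on an interval of length 0.01 falls in a set of measure at most c, and (b) item i appears first among items 1,...,i in a uniformly random ordering of N items (independent of γ). Then ∑_{i=s+1}^{N} Pr[E_i] ≤ 100c · ∑_{i=s+1}^{N} 1/i ≤ 100c · ln(N/s) for any 1 ≤ s < N, and if additionally Pr[E_i] = 0 for i ≤ s with s ≥ ε₁N, then ∑_i Pr[E_i] ≤ 100c · ln(1/ε₁) + O(c). -/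
open MeasureTheory

lemma harm_sum (s : ℕ) (hs : 1 ≤ s) : ∀ N, s ≤ N →
    ∑ i ∈ Finset.Icc (s + 1) N, (1 : ℝ) / i ≤ Real.log N - Real.log s := by
  intro N hN
  induction N with
  | zero => omega
  | succ n ih =>
    rcases Nat.lt_or_ge s (n + 1) with h | h
    · have hn : s ≤ n := by omega
      rw [Finset.sum_Icc_succ_top (by omega)]
      have hpos : (0 : ℝ) < n := by exact_mod_cast (by omega : 0 < n)
      have key : (1 : ℝ) / (n + 1) ≤ Real.log (n + 1) - Real.log n := by
        have hx : (0 : ℝ) < (n : ℝ) / (n + 1) := by positivity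
        have h1 := Real.log_le_sub_one_of_pos hx
        rw [Real.log_div (by positivity) (by positivity)] at h1
        have h2 : (n : ℝ) / (n + 1) - 1 = -(1 / (n + 1)) := by field_simp; ring
        linarith [h2 ▸ h1]
      calc ∑ i ∈ Finset.Icc (s + 1) n, (1 : ℝ) / i + 1 / (n + 1 : ℕ)
          ≤ (Real.log n - Real.log s) + (Real.log (n + 1) - Real.log n) := by
            push_cast; exact add_le_add (ih hn) key
        _ = Real.log (n + 1 : ℕ) - Real.log s := by push_cast; ring
    · have : s = n + 1 := by omega
      subst this
      simp

/-- Suppose event `E i` can occur only if both `A i` (the cutoff `γ`,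
uniform on an interval of length `0.01`, falls in a set of measure at most `c`, so
`ℙ(A i) ≤ 100 c`) and `B i` (item `i` comes first among items `1..i` in a uniformly
random ordering, so `ℙ(B i) = 1/i`) occur, with `A i` and `B i` independent.  Then
`∑_{i=s+1}^N ℙ(E i) ≤ 100 c · ln(N/s)`, and if moreover `ℙ(E i) = 0` for `i ≤ s` with
`s ≥ ε₁ N`, then `∑_{i=1}^N ℙ(E i) ≤ 100 c · ln(1/ε₁) + 100 c`. -/
theorem stmt15 {Ω : Type*} [MeasurableSpace Ω] (ℙ : Measure Ω) [IsProbabilityMeasure ℙ]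
    (N s : ℕ) (hs : 1 ≤ s) (hsN : s < N)
    (c : ℝ) (hc : 0 ≤ c)
    (E A B : ℕ → Set Ω)
    (hsub : ∀ i, E i ⊆ A i ∩ B i)
    (hind : ∀ i, ℙ (A i ∩ B i) = ℙ (A i) * ℙ (B i))
    (hA : ∀ i, ℙ (A i) ≤ ENNReal.ofReal (100 * c))
    (hB : ∀ i, 1 ≤ i → ℙ (B i) = 1 / (i : ENNReal)) :
    (∑ i ∈ Finset.Icc (s + 1) N, (ℙ (E i)).toReal ≤
        100 * c * Real.log ((N : ℝ) / s)) ∧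
    (∀ ε₁ : ℝ, 0 < ε₁ → ε₁ * N ≤ (s : ℝ) → (∀ i ≤ s, ℙ (E i) = 0) →
      ∑ i ∈ Finset.Icc 1 N, (ℙ (E i)).toReal ≤
        100 * c * Real.log (1 / ε₁) + 100 * c) := by
  have hpt : ∀ i, 1 ≤ i → (ℙ (E i)).toReal ≤ 100 * c * (1 / i) := by
    intro i hi
    have hipos : (0 : ℝ) < i := by exact_mod_cast hi
    have h1 : ℙ (E i) ≤ ENNReal.ofReal (100 * c) * (1 / (i : ENNReal)) := by
      calc ℙ (E i) ≤ ℙ (A i ∩ B i) := measure_mono (hsub i)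
        _ = ℙ (A i) * ℙ (B i) := hind i
        _ ≤ ENNReal.ofReal (100 * c) * (1 / (i : ENNReal)) := by
            rw [hB i hi]; exact mul_le_mul_left (hA i) _
    have hfin : ENNReal.ofReal (100 * c) * (1 / (i : ENNReal)) ≠ ⊤ := by
      apply ENNReal.mul_ne_top ENNReal.ofReal_ne_top
      simp [ENNReal.div_eq_top]
      omega
    have := ENNReal.toReal_mono hfin h1
    rw [ENNReal.toReal_mul, ENNReal.toReal_ofReal (by positivity)] at this
    have hiner : ((1 : ENNReal) / (i : ENNReal)).toReal = 1 / (i : ℝ) := by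
      rw [ENNReal.toReal_div]; simp
    rw [hiner] at this
    exact this
  have hsum1 : ∑ i ∈ Finset.Icc (s + 1) N, (ℙ (E i)).toReal ≤
      100 * c * Real.log ((N : ℝ) / s) := by
    have hNpos : (0 : ℝ) < N := by exact_mod_cast (by omega : 0 < N)
    have hspos : (0 : ℝ) < s := by exact_mod_cast hs
    calc ∑ i ∈ Finset.Icc (s + 1) N, (ℙ (E i)).toReal
        ≤ ∑ i ∈ Finset.Icc (s + 1) N, 100 * c * (1 / i) := by
          apply Finset.sum_le_sum
          intro i hi
          exact hpt i (by simp [Finset.mem_Icc] at hi; omega)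
      _ = 100 * c * ∑ i ∈ Finset.Icc (s + 1) N, (1 : ℝ) / i := by
          rw [Finset.mul_sum]
      _ ≤ 100 * c * (Real.log N - Real.log s) := by
          apply mul_le_mul_of_nonneg_left (harm_sum s hs N (le_of_lt hsN)) (by positivity)
      _ = 100 * c * Real.log ((N : ℝ) / s) := by
          rw [Real.log_div (ne_of_gt hNpos) (ne_of_gt hspos)]
  refine ⟨hsum1, ?_⟩
  intro ε₁ hε hεN hzero
  have hNpos : (0 : ℝ) < N := by exact_mod_cast (by omega : 0 < N)
  have hspos : (0 : ℝ) < s := by exact_mod_cast hs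
  have hsplit : ∑ i ∈ Finset.Icc 1 N, (ℙ (E i)).toReal =
      ∑ i ∈ Finset.Icc (s + 1) N, (ℙ (E i)).toReal := by
    symm
    apply Finset.sum_subset
    · intro i hi; simp only [Finset.mem_Icc] at *; omega
    · intro i hi hni
      simp only [Finset.mem_Icc] at hi hni
      rw [hzero i (by omega)]
      simp
  rw [hsplit]
  have hlog : Real.log ((N : ℝ) / s) ≤ Real.log (1 / ε₁) := by
    apply Real.log_le_log (by positivity)
    rw [div_le_div_iff₀ hspos hε]
    nlinarith
  have : 100 * c * Real.log ((N : ℝ) / s) ≤ 100 * c * Real.log (1 / ε₁) :=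
    mul_le_mul_of_nonneg_left hlog (by positivity)
  nlinarith
end

section
/- For any constant ε > 0 and k ≥ 2, given a k-SAT instance on n₀ variables with m clauses, construct a new instance by adding n ≥ C·n₀/ε dummy variables (for suitable constant C depending on k) and, for every k-subset of the new variable set containing at least one dummy variable, adding the all-positive clause on that subset. Then: (1) the new instance has at least (1 − ε)·binom(n₀ + n, k) clauses, and (2) the minimum number of unsatisfied clauses in the new instance equals the minimum number of unsatisfied clauses in the original instance. -/
set_option maxHeartbeats 1000000

open Finset

lemma stmt16_count_all (k n₀ n : ℕ) :
    ((univ : Finset (Finset (Fin n₀ ⊕ Fin n))).filter (fun S => S.card = k)).card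
      = (n₀ + n).choose k := by
  have h : (univ : Finset (Finset (Fin n₀ ⊕ Fin n))).filter (fun S => S.card = k)
      = (univ : Finset (Fin n₀ ⊕ Fin n)).powersetCard k := by
    ext S; simp [Finset.mem_powersetCard]
  rw [h, Finset.card_powersetCard, Finset.card_univ, Fintype.card_sum,
    Fintype.card_fin, Fintype.card_fin]

lemma stmt16_count_left (k n₀ n : ℕ) :
    ((univ : Finset (Finset (Fin n₀ ⊕ Fin n))).filter
        (fun S => S.card = k ∧ ¬ ∃ w ∈ S, w.isRight = true)).card = n₀.choose k := by
  rw [show n₀.choose k = ((univ : Finset (Fin n₀)).powersetCard k).card by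
    rw [Finset.card_powersetCard, Finset.card_univ, Fintype.card_fin]]
  refine (Finset.card_bij (fun T _ => T.image Sum.inl) ?_ ?_ ?_).symm
  · intro T hT
    simp only [Finset.mem_powersetCard] at hT
    simp only [Finset.mem_filter, Finset.mem_univ, true_and]
    refine ⟨by rw [Finset.card_image_of_injective _ Sum.inl_injective, hT.2], ?_⟩
    rintro ⟨w, hw, hw2⟩
    simp only [Finset.mem_image] at hw
    obtain ⟨i, _, rfl⟩ := hw
    simp at hw2
  · intro a _ b _ h
    exact Finset.image_injective Sum.inl_injective h
  · intro S hS
    simp only [Finset.mem_filter, Finset.mem_univ, true_and] at hS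
    have hSeq : S = (univ.filter (fun i => Sum.inl i ∈ S)).image Sum.inl := by
      ext w
      simp only [Finset.mem_image, Finset.mem_filter, Finset.mem_univ, true_and]
      constructor
      · intro hw
        cases w with
        | inl i => exact ⟨i, hw, rfl⟩
        | inr j => exact absurd ⟨Sum.inr j, hw, rfl⟩ hS.2
      · rintro ⟨i, hi, rfl⟩; exact hi
    refine ⟨univ.filter (fun i => Sum.inl i ∈ S), ?_, hSeq.symm⟩
    simp only [Finset.mem_powersetCard]
    refine ⟨Finset.subset_univ _, ?_⟩
    have := hS.1
    rw [hSeq, Finset.card_image_of_injective _ Sum.inl_injective] at this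
    exact this

/-- The dense reduction for Min-k-SAT.  A clause is a `k`-set of literals
(pairs variable/sign, with distinct variables); it is unsatisfied by `α` iff every literal
is falsified.  Given a k-SAT instance `C₀` on `Fin n₀`, add `n` dummy variables and, for
every `k`-subset of the enlarged variable set containing a dummy variable, the
all-positive clause on it.  There is a constant `Cc` (depending only on `k`) such that
whenever `n ≥ Cc·n₀/ε`: (1) the new instance has at least `(1-ε)·choose (n₀+n) k`
clauses, and (2) the minimum numbers of unsatisfied clauses of the two instances agree. -/
theorem stmt16 (k : ℕ) (hk : 2 ≤ k) (ε : ℝ) (hε0 : 0 < ε) (hε1 : ε < 1) :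
    ∃ Cc : ℝ, 0 < Cc ∧
      ∀ (n₀ n : ℕ) (C₀ : Finset (Finset (Fin n₀ × Bool))),
        (∀ c ∈ C₀, c.card = k ∧ (c.image Prod.fst).card = k) →
        Cc * n₀ / ε ≤ (n : ℝ) →
        ∀ newC : Finset (Finset ((Fin n₀ ⊕ Fin n) × Bool)),
          newC = C₀.image (fun c => c.image (fun p => (Sum.inl p.1, p.2))) ∪
            ((Finset.univ : Finset (Finset (Fin n₀ ⊕ Fin n))).filter
                (fun S => S.card = k ∧ ∃ w ∈ S, w.isRight = true)).image
              (fun S => S.image (fun w => (w, true))) →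
          (1 - ε) * ((n₀ + n).choose k : ℝ) ≤ (newC.card : ℝ) ∧
          sInf {t : ℕ | ∃ α : Fin n₀ → Bool,
              (C₀.filter (fun c => ∀ p ∈ c, α p.1 ≠ p.2)).card = t} =
          sInf {t : ℕ | ∃ β : (Fin n₀ ⊕ Fin n) → Bool,
              (newC.filter (fun c => ∀ p ∈ c, β p.1 ≠ p.2)).card = t} := by
  refine ⟨1, one_pos, ?_⟩
  intro n₀ n C₀ hC₀ hn newC hnew
  have finj : Function.Injective
      (fun p : Fin n₀ × Bool => ((Sum.inl p.1 : Fin n₀ ⊕ Fin n), p.2)) := by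
    intro a b h
    cases a; cases b; simp_all [Prod.ext_iff]
  have winj : Function.Injective
      (fun w : Fin n₀ ⊕ Fin n => (w, true)) := by
    intro a b h; simpa [Prod.ext_iff] using h
  constructor
  · -- Part 1
    set A := ((Finset.univ : Finset (Finset (Fin n₀ ⊕ Fin n))).filter
        (fun S => S.card = k ∧ ∃ w ∈ S, w.isRight = true)) with hA
    have hsub : A.image (fun S => S.image (fun w => (w, true))) ⊆ newC := by
      rw [hnew]; exact Finset.subset_union_right
    have hsplit := Finset.card_filter_add_card_filter_not
      (s := (univ : Finset (Finset (Fin n₀ ⊕ Fin n))).filter (fun S => S.card = k))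
      (p := fun S => ∃ w ∈ S, w.isRight = true)
    rw [Finset.filter_filter, Finset.filter_filter] at hsplit
    rw [stmt16_count_all k n₀ n, stmt16_count_left k n₀ n] at hsplit
    have hYX : n₀.choose k ≤ (n₀ + n).choose k :=
      Nat.choose_le_choose k (Nat.le_add_right _ _)
    have hAcard : A.card = (n₀ + n).choose k - n₀.choose k := by
      rw [hA]; omega
    have hcard : (n₀ + n).choose k - n₀.choose k ≤ newC.card := by
      calc (n₀ + n).choose k - n₀.choose k = A.card := hAcard.symm
        _ = (A.image (fun S => S.image (fun w => (w, true)))).card :=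
            (Finset.card_image_of_injective _ (Finset.image_injective winj)).symm
        _ ≤ newC.card := Finset.card_le_card hsub
    -- numeric bound
    have h1 : n₀.choose k ≤ n₀ * n₀.choose (k - 1) := by
      rcases Nat.eq_zero_or_pos n₀ with h | h
      · subst h; rw [Nat.choose_eq_zero_of_lt (by omega)]; omega
      · obtain ⟨m, rfl⟩ : ∃ m, n₀ = m + 1 := ⟨n₀ - 1, by omega⟩
        have hs := Nat.add_one_mul_choose_eq m (k - 1)
        have hk1 : k - 1 + 1 = k := by omega
        simp only [Nat.succ_eq_add_one, hk1] at hs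
        calc (m + 1).choose k ≤ (m + 1).choose k * k :=
              Nat.le_mul_of_pos_right _ (by omega)
          _ = (m + 1) * m.choose (k - 1) := hs.symm
          _ ≤ (m + 1) * (m + 1).choose (k - 1) :=
              Nat.mul_le_mul_left _ (Nat.choose_le_choose _ (Nat.le_succ m))
    have h2 : n * n₀.choose (k - 1) ≤ (n₀ + n).choose k := by
      rw [Nat.add_choose_eq]
      have hm : ((k - 1, 1)) ∈ Finset.HasAntidiagonal.antidiagonal k := by
        simp only [Finset.HasAntidiagonal.mem_antidiagonal]; omega
      calc n * n₀.choose (k - 1) = n₀.choose (k - 1) * n.choose 1 := by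
            rw [Nat.choose_one_right]; ring
        _ ≤ _ := Finset.single_le_sum
            (f := fun ij : ℕ × ℕ => n₀.choose ij.1 * n.choose ij.2)
            (fun i _ => Nat.zero_le _) hm
    have hεn : (n₀ : ℝ) ≤ ε * n := by
      rw [one_mul] at hn
      have := (div_le_iff₀ hε0).mp hn
      linarith
    have hYε : (n₀.choose k : ℝ) ≤ ε * ((n₀ + n).choose k) := by
      have c1 : (n₀.choose k : ℝ) ≤ (n₀ : ℝ) * (n₀.choose (k - 1) : ℝ) := by
        exact_mod_cast h1
      have c2 : (n : ℝ) * (n₀.choose (k - 1) : ℝ) ≤ ((n₀ + n).choose k : ℝ) := by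
        exact_mod_cast h2
      have hnn : (0 : ℝ) ≤ (n₀.choose (k - 1) : ℝ) := by positivity
      nlinarith [mul_le_mul_of_nonneg_right hεn hnn]
    have hcastR : ((n₀ + n).choose k : ℝ) - (n₀.choose k : ℝ) ≤ (newC.card : ℝ) := by
      have : (((n₀ + n).choose k - n₀.choose k : ℕ) : ℝ) ≤ (newC.card : ℝ) := by
        exact_mod_cast hcard
      rwa [Nat.cast_sub hYX] at this
    linarith
  · -- Part 2
    have keyA : ∀ β : (Fin n₀ ⊕ Fin n) → Bool,
        (C₀.filter (fun c => ∀ p ∈ c, (fun i => β (Sum.inl i)) p.1 ≠ p.2)).card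
          ≤ (newC.filter (fun c => ∀ p ∈ c, β p.1 ≠ p.2)).card := by
      intro β
      apply Finset.card_le_card_of_injOn
        (fun c => c.image (fun p => (Sum.inl p.1, p.2)))
      · intro c hc
        simp only [Finset.mem_coe, Finset.mem_filter] at hc ⊢
        refine ⟨?_, ?_⟩
        · rw [hnew]
          exact Finset.mem_union_left _ (Finset.mem_image_of_mem _ hc.1)
        · intro q hq
          simp only [Finset.mem_image] at hq
          obtain ⟨p, hp, rfl⟩ := hq
          exact hc.2 p hp
      · intro a _ b _ h
        exact Finset.image_injective finj h
    have keyB : ∀ α : Fin n₀ → Bool,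
        (newC.filter (fun c => ∀ p ∈ c, (Sum.elim α (fun _ => true)) p.1 ≠ p.2)).card
          = (C₀.filter (fun c => ∀ p ∈ c, α p.1 ≠ p.2)).card := by
      intro α
      set β := Sum.elim α (fun _ : Fin n => true) with hβ
      rw [hnew, Finset.filter_union]
      have h2 : (((Finset.univ : Finset (Finset (Fin n₀ ⊕ Fin n))).filter
            (fun S => S.card = k ∧ ∃ w ∈ S, w.isRight = true)).image
              (fun S => S.image (fun w => (w, true)))).filter
            (fun c => ∀ p ∈ c, β p.1 ≠ p.2) = ∅ := by
        rw [Finset.eq_empty_iff_forall_notMem]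
        intro c hc
        simp only [Finset.mem_filter, Finset.mem_image] at hc
        obtain ⟨⟨S, hS, rfl⟩, hc2⟩ := hc
        simp only [Finset.mem_filter, Finset.mem_univ, true_and] at hS
        obtain ⟨w, hw, hwr⟩ := hS.2
        have hval := hc2 (w, true) (Finset.mem_image_of_mem _ hw)
        cases w with
        | inl i => simp at hwr
        | inr j => simp [hβ] at hval
      rw [h2, Finset.union_empty, Finset.filter_image,
        Finset.card_image_of_injective _ (Finset.image_injective finj)]
      have hfc : ∀ c ∈ C₀,
          ((∀ q ∈ c.image (fun p : Fin n₀ × Bool =>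
              ((Sum.inl p.1 : Fin n₀ ⊕ Fin n), p.2)), β q.1 ≠ q.2)
            ↔ (∀ p ∈ c, α p.1 ≠ p.2)) := by
        intro c _
        constructor
        · intro h p hp
          simpa [hβ] using h (Sum.inl p.1, p.2) (Finset.mem_image_of_mem _ hp)
        · intro h q hq
          simp only [Finset.mem_image] at hq
          obtain ⟨p, hp, rfl⟩ := hq
          simpa [hβ] using h p hp
      rw [Finset.filter_congr hfc]
    have hne1 : {t : ℕ | ∃ α : Fin n₀ → Bool,
        (C₀.filter (fun c => ∀ p ∈ c, α p.1 ≠ p.2)).card = t}.Nonempty :=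
      ⟨_, fun _ => true, rfl⟩
    have hne2 : {t : ℕ | ∃ β : (Fin n₀ ⊕ Fin n) → Bool,
        (newC.filter (fun c => ∀ p ∈ c, β p.1 ≠ p.2)).card = t}.Nonempty :=
      ⟨_, fun _ => true, rfl⟩
    apply le_antisymm
    · refine le_csInf hne2 ?_
      rintro t ⟨β, rfl⟩
      exact le_trans (Nat.sInf_le ⟨fun i => β (Sum.inl i), rfl⟩) (keyA β)
    · refine le_csInf hne1 ?_
      rintro t ⟨α, rfl⟩
      exact Nat.sInf_le ⟨Sum.elim α fun _ => true, keyB α⟩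
end
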